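/- Fix integers k ≥ 3 and p ≥ 3 and a real η > 0, and define h: (0, ∞) → ℝ by h(x) = 2p(p/k)^{2/(k−2)} η x^{(2k−2)/(k−2)} − 2p x² + 1. Then h attains its minimum on (0, ∞) at x_min = (k/p)·((k − 2)/((k − 1)η))^{(k−2)/2}, and h(x_min) > 0 if and only if η > η_c, where η_c = (k − 2)·(2k²/(p(k − 1)^{k−1}))^{1/(k−2)}. In particular, h has a zero in (0, ∞) if and only if η ≤ η_c. -/

import Mathlib

open Real

lemma aux_min (a b t0 r : ℝ) (ha : 0 < a) (ht0 : 0 < t0) (hr : 1 ≤ r)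
    (hb : a * r * t0 ^ (r - 1) = b) (t : ℝ) (ht : 0 ≤ t) :
    a * t0 ^ r - b * t0 ≤ a * t ^ r - b * t := by
  have hs : -1 ≤ t / t0 - 1 := by
    have : 0 ≤ t / t0 := div_nonneg ht ht0.le
    linarith
  have hB := one_add_mul_self_le_rpow_one_add hs hr
  rw [add_sub_cancel] at hB
  rw [Real.div_rpow ht ht0.le] at hB
  have h1 : t0 ^ (r - 1) * t0 = t0 ^ r := by
    rw [← Real.rpow_add_one ht0.ne']; congr 1; ring
  have h2 : a * t0 ^ r * (1 + r * (t / t0 - 1)) ≤ a * t0 ^ r * (t ^ r / t0 ^ r) :=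
    mul_le_mul_of_nonneg_left hB (by positivity)
  have h3 : a * t0 ^ r * (t ^ r / t0 ^ r) = a * t ^ r := by
    field_simp
  have h4 : a * t0 ^ r * (1 + r * (t / t0 - 1)) = a * t0 ^ r + b * t - b * t0 := by
    rw [← hb, ← h1]; field_simp; ring
  linarith

set_option maxHeartbeats 1000000 in
theorem h_min_and_zero (k p : ℕ) (hk : 3 ≤ k) (hp : 3 ≤ p) (η : ℝ) (hη : 0 < η) :
    let K : ℝ := (k : ℝ)
    let P : ℝ := (p : ℝ)
    let h : ℝ → ℝ := fun x =>
      2 * P * (P / K) ^ ((2 : ℝ) / (K - 2)) * η * x ^ ((2 * K - 2) / (K - 2))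
        - 2 * P * x ^ 2 + 1
    let xmin : ℝ := (K / P) * ((K - 2) / ((K - 1) * η)) ^ ((K - 2) / 2)
    let ηc : ℝ := (K - 2) * (2 * K ^ 2 / (P * (K - 1) ^ (K - 1))) ^ ((1 : ℝ) / (K - 2))
    (∀ x : ℝ, 0 < x → h xmin ≤ h x) ∧ (0 < h xmin ↔ ηc < η) ∧
      ((∃ x : ℝ, 0 < x ∧ h x = 0) ↔ η ≤ ηc) := by
  intro K P h xmin ηc
  have hK3 : (3:ℝ) ≤ K := by show (3:ℝ) ≤ (k:ℝ); exact_mod_cast hk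
  have hP3 : (3:ℝ) ≤ P := by show (3:ℝ) ≤ (p:ℝ); exact_mod_cast hp
  have hKpos : (0:ℝ) < K := by linarith
  have hPpos : (0:ℝ) < P := by linarith
  have he : (0:ℝ) < K - 2 := by linarith
  have hK1 : (0:ℝ) < K - 1 := by linarith
  have hD : (0:ℝ) < (K - 2) / ((K - 1) * η) := by positivity
  set D : ℝ := (K - 2) / ((K - 1) * η) with hD_def
  set A : ℝ := (P / K) ^ ((2 : ℝ) / (K - 2)) with hA_def
  have hApos : 0 < A := Real.rpow_pos_of_pos (by positivity) _
  set r : ℝ := (K - 1) / (K - 2) with hr_def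
  have hr1 : 1 ≤ r := by
    rw [hr_def, le_div_iff₀ he]; linarith
  have hr0 : 0 < r := by positivity
  have hxminpos : 0 < xmin := by
    have : 0 < D ^ ((K - 2) / 2) := Real.rpow_pos_of_pos hD _
    simp only [xmin]
    positivity
  -- the square of xmin
  have I1 : xmin ^ 2 = (K / P) ^ 2 * D ^ (K - 2) := by
    show ((K / P) * D ^ ((K - 2)/2)) ^ 2 = _
    rw [mul_pow, sq (D ^ ((K - 2)/2)), ← Real.rpow_add hD]
    congr 1
    ring
  have ht0pos : 0 < xmin ^ 2 := by positivity
  have I2 : (xmin ^ 2) ^ ((1:ℝ) / (K - 2)) = (K / P) ^ ((2:ℝ) / (K - 2)) * D := by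
    rw [I1, Real.mul_rpow (by positivity) (by positivity),
      ← Real.rpow_natCast (K / P) 2, ← Real.rpow_mul (by positivity),
      ← Real.rpow_mul hD.le]
    have e1 : ((2:ℕ):ℝ) * (1 / (K - 2)) = 2 / (K - 2) := by push_cast; ring
    have e2 : (K - 2) * (1 / (K - 2)) = 1 := by field_simp
    rw [e1, e2, Real.rpow_one]
  have I3 : A * (K / P) ^ ((2:ℝ) / (K - 2)) = 1 := by
    rw [hA_def, ← Real.mul_rpow (by positivity) (by positivity)]
    rw [div_mul_div_comm, mul_comm P K, div_self (by positivity), Real.one_rpow]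
  -- exponent rewriting
  have hq : ∀ x : ℝ, 0 < x → x ^ ((2 * K - 2) / (K - 2)) = (x ^ 2) ^ r := by
    intro x hx
    rw [← Real.rpow_natCast x 2, ← Real.rpow_mul hx.le]
    congr 1
    push_cast
    rw [hr_def, mul_div_assoc']
    congr 1
    ring
  -- the key critical-point identity
  have hb : 2 * P * A * η * r * (xmin ^ 2) ^ (r - 1) = 2 * P := by
    have hrr : r - 1 = 1 / (K - 2) := by
      rw [hr_def, eq_div_iff he.ne', sub_mul, div_mul_cancel₀ _ he.ne']
      ring
    rw [hrr, I2]
    have : 2 * P * A * η * r * ((K / P) ^ ((2:ℝ) / (K - 2)) * D) =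
        (A * (K / P) ^ ((2:ℝ) / (K - 2))) * (2 * P * η * r * D) := by ring
    rw [this, I3, one_mul, hr_def, hD_def]
    field_simp
  -- minimality
  have part1 : ∀ x : ℝ, 0 < x → h xmin ≤ h x := by
    intro x hx
    have key := aux_min (2 * P * A * η) (2 * P) (xmin ^ 2) r (by positivity)
      ht0pos hr1 hb (x ^ 2) (sq_nonneg x)
    simp only [h]
    rw [hq x hx, hq xmin hxminpos, ← hA_def]
    linarith
  -- value at the minimum
  have ht0r : (xmin ^ 2) ^ r = (xmin ^ 2) ^ (r - 1) * xmin ^ 2 := by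
    rw [← Real.rpow_add_one ht0pos.ne']; congr 1; ring
  have hval : h xmin = 1 - 2 * K ^ 2 / (P * (K - 1)) * D ^ (K - 2) := by
    show 2 * P * A * η * xmin ^ ((2 * K - 2) / (K - 2)) - 2 * P * xmin ^ 2 + 1 = _
    rw [hq xmin hxminpos, ht0r]
    have h5 : 2 * P * A * η * ((xmin ^ 2) ^ (r - 1) * xmin ^ 2)
        = 2 * P / r * xmin ^ 2 := by
      rw [div_mul_eq_mul_div, eq_div_iff hr0.ne']
      linear_combination xmin ^ 2 * hb
    rw [h5, I1, hr_def]
    field_simp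
    ring
  -- part 2
  have hM : (0:ℝ) < P * (K - 1) / (2 * K ^ 2) := by positivity
  set M : ℝ := P * (K - 1) / (2 * K ^ 2) with hM_def
  have hMpow : 0 < M ^ ((1:ℝ) / (K - 2)) := Real.rpow_pos_of_pos hM _
  have hMe : (M ^ ((1:ℝ) / (K - 2))) ^ (K - 2) = M := by
    rw [← Real.rpow_mul hM.le, one_div, inv_mul_cancel₀ he.ne', Real.rpow_one]
  have hstep1 : 0 < h xmin ↔ D ^ (K - 2) < M := by
    rw [hval]
    have hcM : 2 * K ^ 2 / (P * (K - 1)) * M = 1 := by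
      rw [hM_def]; field_simp
    have hc : (0:ℝ) < 2 * K ^ 2 / (P * (K - 1)) := by positivity
    constructor
    · intro h'
      have h2 : 2 * K ^ 2 / (P * (K - 1)) * D ^ (K - 2)
          < 2 * K ^ 2 / (P * (K - 1)) * M := by linarith
      exact lt_of_mul_lt_mul_left h2 hc.le
    · intro h'
      have h2 := mul_lt_mul_of_pos_left h' hc
      linarith
  have hstep2 : D ^ (K - 2) < M ↔ D < M ^ ((1:ℝ) / (K - 2)) := by
    have := Real.rpow_lt_rpow_iff hD.le hMpow.le he
    rw [hMe] at this
    exact this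
  have hηc_eq : ηc = (K - 2) / ((K - 1) * M ^ ((1:ℝ) / (K - 2))) := by
    show (K - 2) * (2 * K ^ 2 / (P * (K - 1) ^ (K - 1))) ^ ((1:ℝ) / (K - 2)) = _
    set C : ℝ := 2 * K ^ 2 / (P * (K - 1) ^ (K - 1)) with hC_def
    have hK1pow : 0 < (K - 1) ^ (K - 1) := Real.rpow_pos_of_pos hK1 _
    have hK1pow2 : 0 < (K - 1) ^ (K - 2) := Real.rpow_pos_of_pos hK1 _
    have hCpos : 0 < C := by rw [hC_def]; positivity
    have h6 : (K - 1) ^ (K - 1) = (K - 1) ^ (K - 2) * (K - 1) := by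
      rw [← Real.rpow_add_one hK1.ne']; congr 1; ring
    have hCM : C * M = ((K - 1) ^ (K - 2))⁻¹ := by
      rw [hC_def, hM_def, h6]
      field_simp
    have h7 : C ^ ((1:ℝ) / (K - 2)) * M ^ ((1:ℝ) / (K - 2)) = (K - 1)⁻¹ := by
      rw [← Real.mul_rpow hCpos.le hM.le, hCM,
        Real.inv_rpow hK1pow2.le, ← Real.rpow_mul hK1.le, mul_one_div,
        div_self he.ne', Real.rpow_one]
    rw [eq_div_iff (by positivity)]
    have : (K - 2) * C ^ ((1:ℝ) / (K - 2)) * ((K - 1) * M ^ ((1:ℝ) / (K - 2)))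
        = (K - 2) * (K - 1) * (C ^ ((1:ℝ) / (K - 2)) * M ^ ((1:ℝ) / (K - 2))) := by
      ring
    rw [this, h7]
    field_simp
  have hstep3 : D < M ^ ((1:ℝ) / (K - 2)) ↔ ηc < η := by
    rw [hηc_eq, hD_def, div_lt_iff₀ (by positivity), div_lt_iff₀ (by positivity),
      show M ^ ((1:ℝ) / (K - 2)) * ((K - 1) * η)
        = η * ((K - 1) * M ^ ((1:ℝ) / (K - 2))) from by ring]
  have part2 : 0 < h xmin ↔ ηc < η := hstep1.trans (hstep2.trans hstep3)
  refine ⟨part1, part2, ?_⟩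
  constructor
  · rintro ⟨x, hx, hzero⟩
    by_contra hcon
    push_neg at hcon
    have hpos := part2.mpr hcon
    have hle := part1 x hx
    rw [hzero] at hle
    linarith
  · intro hle
    have hnot : h xmin ≤ 0 := by
      by_contra hpos
      push_neg at hpos
      have := part2.mp hpos
      linarith
    have hsqP : (0:ℝ) < Real.sqrt P := Real.sqrt_pos.mpr hPpos
    have hs2 : (0:ℝ) < 1 / (2 * Real.sqrt P) := by positivity
    set s : ℝ := 1 / (2 * Real.sqrt P) with hs_def
    have hsq : s ^ 2 = 1 / (4 * P) := by
      rw [hs_def, div_pow, mul_pow, Real.sq_sqrt hPpos.le]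
      norm_num
    have hsle : s ≤ xmin := by
      by_contra hgt
      push_neg at hgt
      have h8 : 2 * P * xmin ^ 2 < 1 := by
        have hx2 : xmin ^ 2 < s ^ 2 := by nlinarith
        rw [hsq] at hx2
        rw [lt_div_iff₀ (by positivity)] at hx2
        nlinarith
      have hpos' : 0 < h xmin := by
        show 0 < 2 * P * A * η * xmin ^ ((2 * K - 2) / (K - 2)) - 2 * P * xmin ^ 2 + 1
        have hX : 0 < xmin ^ ((2 * K - 2) / (K - 2)) := Real.rpow_pos_of_pos hxminpos _
        have hterm : 0 < 2 * P * A * η * xmin ^ ((2 * K - 2) / (K - 2)) :=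
          mul_pos (mul_pos (mul_pos (by linarith) hApos) hη) hX
        linarith
      linarith
    have hhs : 0 < h s := by
      show 0 < 2 * P * A * η * s ^ ((2 * K - 2) / (K - 2)) - 2 * P * s ^ 2 + 1
      have hrp : 0 < s ^ ((2 * K - 2) / (K - 2)) := Real.rpow_pos_of_pos hs2 _
      have heq : 2 * P * s ^ 2 = 1 / 2 := by
        rw [hsq]; field_simp; ring
      have hterm : 0 < 2 * P * A * η * s ^ ((2 * K - 2) / (K - 2)) :=
        mul_pos (mul_pos (mul_pos (by linarith) hApos) hη) hrp
      linarith
    have hcont : ContinuousOn h (Set.Icc s xmin) := by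
      have hc1 : ContinuousOn (fun x : ℝ => x ^ ((2 * K - 2) / (K - 2)))
          (Set.Icc s xmin) := by
        apply ContinuousOn.rpow_const continuousOn_id
        intro x hx
        exact Or.inl (ne_of_gt (lt_of_lt_of_le hs2 hx.1))
      show ContinuousOn (fun x : ℝ =>
        2 * P * A * η * x ^ ((2 * K - 2) / (K - 2)) - 2 * P * x ^ 2 + 1) _
      exact ((continuousOn_const.mul hc1).sub
        (continuousOn_const.mul (continuous_pow 2).continuousOn)).add continuousOn_const
    have hIVT := intermediate_value_Icc' hsle hcont
    have h0mem : (0:ℝ) ∈ Set.Icc (h xmin) (h s) := ⟨hnot, hhs.le⟩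
    obtain ⟨x, hxmem, hx0⟩ := hIVT h0mem
    exact ⟨x, lt_of_lt_of_le hs2 hxmem.1, hx0⟩
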